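/- Let V be a complex vector space of dimension 2n with a nondegenerate symmetric bilinear form ω, and let W ⊆ V be a nondegenerate hyperplane (so dim W = 2n−1 and ω restricted to W is nondegenerate). Then for every isotropic subspace M ⊆ W with dim M = n−1 there exists a maximal isotropic (Lagrangian) subspace L of V with L ∩ W = M, and any two such L intersect W exactly in M. -/

import Mathlib

open Module Submodule LinearMap.BilinForm

/-- An isotropic subspace of a nondegenerate reflexive bilinear space has at most
half the dimension. -/
lemma stmt6_iso_bound {V : Type*} [AddCommGroup V] [Module ℂ V] [FiniteDimensional ℂ V]
    (B : LinearMap.BilinForm ℂ V) (hB : B.Nondegenerate) (hrefl : B.IsRefl)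
    (P : Submodule ℂ V) (hP : ∀ x ∈ P, ∀ y ∈ P, B x y = 0) :
    2 * Module.finrank ℂ P ≤ Module.finrank ℂ V := by
  have hle : P ≤ B.orthogonal P := fun x hx =>
    (mem_orthogonal_iff).2 fun m hm => hP m hm x hx
  have h1 := finrank_add_finrank_orthogonal hrefl (B := B) P
  rw [B.orthogonal_top_eq_bot hB, inf_bot_eq, finrank_bot, add_zero] at h1
  have h2 := Submodule.finrank_mono hle
  omega

theorem stmt6 {V : Type*} [AddCommGroup V] [Module ℂ V] [FiniteDimensional ℂ V]
    (n : ℕ) (hn : 1 ≤ n) (hdim : Module.finrank ℂ V = 2 * n)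
    (ω : LinearMap.BilinForm ℂ V)
    (hnd : LinearMap.BilinForm.Nondegenerate ω)
    (hsym : ∀ x y : V, ω x y = ω y x)
    (W : Submodule ℂ V) (hWdim : Module.finrank ℂ W = 2 * n - 1)
    (hWnd : ∀ w ∈ W, (∀ w' ∈ W, ω w w' = 0) → w = 0)
    (M : Submodule ℂ V) (hMW : M ≤ W)
    (hMiso : ∀ x ∈ M, ∀ y ∈ M, ω x y = 0)
    (hMdim : Module.finrank ℂ M = n - 1) :
    (∃ L : Submodule ℂ V, (∀ x ∈ L, ∀ y ∈ L, ω x y = 0) ∧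
        Module.finrank ℂ L = n ∧ L ⊓ W = M) ∧
    (∀ L : Submodule ℂ V, (∀ x ∈ L, ∀ y ∈ L, ω x y = 0) →
        Module.finrank ℂ L = n → M ≤ L → L ⊓ W = M) := by
  have hrefl : ω.IsRefl := fun x y h => (hsym y x).trans h
  -- the restricted form on W and its nondegeneracy
  set B : LinearMap.BilinForm ℂ W := ω.restrict W with hB
  have hBnd : B.Nondegenerate := by
    constructor
    · intro x hx
      ext
      refine hWnd x x.2 fun w' hw' => ?_
      simpa [hB] using hx ⟨w', hw'⟩
    · intro x hx
      ext
      refine hWnd x x.2 fun w' hw' => ?_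
      rw [hsym]
      simpa [hB] using hx ⟨w', hw'⟩
  have hBrefl : B.IsRefl := by
    intro x y h
    simpa [hB] using hrefl x y (by simpa [hB] using h)
  -- any isotropic subspace of V contained in W has dimension ≤ n - 1
  have key : ∀ P : Submodule ℂ V, P ≤ W → (∀ x ∈ P, ∀ y ∈ P, ω x y = 0) →
      Module.finrank ℂ P ≤ n - 1 := by
    intro P hPW hPiso
    set P' : Submodule ℂ W := P.comap W.subtype with hP'
    have hfr : Module.finrank ℂ P' = Module.finrank ℂ P :=
      (Submodule.comapSubtypeEquivOfLe hPW).finrank_eq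
    have hiso' : ∀ x ∈ P', ∀ y ∈ P', B x y = 0 := by
      intro x hx y hy
      simpa [hB] using hPiso x hx y hy
    have := stmt6_iso_bound B hBnd hBrefl P' hiso'
    omega
  -- Part 2: uniqueness
  have part2 : ∀ L : Submodule ℂ V, (∀ x ∈ L, ∀ y ∈ L, ω x y = 0) →
      Module.finrank ℂ L = n → M ≤ L → L ⊓ W = M := by
    intro L hLiso hLdim hML
    have hMle : M ≤ L ⊓ W := le_inf hML hMW
    have hiso : ∀ x ∈ L ⊓ W, ∀ y ∈ L ⊓ W, ω x y = 0 := fun x hx y hy =>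
      hLiso x hx.1 y hy.1
    have hle := key (L ⊓ W) inf_le_right hiso
    exact (Submodule.eq_of_le_of_finrank_le hMle (by omega)).symm
  refine ⟨?_, part2⟩
  -- Part 1: existence
  -- the orthogonal complement of W is spanned by an anisotropic vector v
  have hWorth : Module.finrank ℂ (ω.orthogonal W) = 1 := by
    rw [finrank_orthogonal hnd, hdim, hWdim]; omega
  obtain ⟨v, hv⟩ : ∃ v : ω.orthogonal W, v ≠ 0 := by
    rw [← Module.finrank_pos_iff_exists_ne_zero (R := ℂ), hWorth]
    exact one_pos
  have hvW : ∀ w' ∈ W, ω w' (v : V) = 0 := fun w' hw' =>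
    (mem_orthogonal_iff.1 v.2) w' hw'
  have hvnotW : (v : V) ∉ W := by
    intro hmem
    exact hv (Subtype.ext (hWnd v hmem fun w' hw' => hsym (v : V) w' ▸ hvW w' hw'))
  have hvv : ω (v : V) (v : V) ≠ 0 := by
    intro hzero
    -- then v would be orthogonal to all of V = W ⊔ span v
    have htop : W ⊔ (ℂ ∙ (v : V)) = ⊤ := by
      have h1 : Module.finrank ℂ (ℂ ∙ (v : V)) = 1 :=
        finrank_span_singleton (fun h => hvnotW (h ▸ W.zero_mem))
      have h2 := Submodule.finrank_sup_add_finrank_inf_eq W (ℂ ∙ (v : V))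
      have h3 : W ⊓ (ℂ ∙ (v : V)) = ⊥ := by
        rw [Submodule.eq_bot_iff]
        intro x ⟨hxW, hxs⟩
        obtain ⟨c, rfl⟩ := Submodule.mem_span_singleton.1 hxs
        rcases eq_or_ne c 0 with rfl | hc
        · simp
        · exact absurd ((W.smul_mem_iff hc).1 hxW) hvnotW
      have h4 : Module.finrank ℂ (W ⊔ (ℂ ∙ (v : V)) : Submodule ℂ V)
          ≤ Module.finrank ℂ V := Submodule.finrank_le _
      apply Submodule.eq_top_of_finrank_eq
      rw [h3, finrank_bot] at h2
      omega
    apply hv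
    ext
    refine hnd.1 (v : V) fun x => ?_
    have hx : x ∈ W ⊔ (ℂ ∙ (v : V)) := htop ▸ Submodule.mem_top
    obtain ⟨w', hw', z, hz, rfl⟩ := Submodule.mem_sup.1 hx
    obtain ⟨c, rfl⟩ := Submodule.mem_span_singleton.1 hz
    have := hvW w' hw'
    simp [hsym (v : V) w', this, hzero]
  -- find w ∈ M^⊥ ⊓ W with ω w w ≠ 0
  have hMorth : Module.finrank ℂ (ω.orthogonal M) = n + 1 := by
    rw [finrank_orthogonal hnd, hdim, hMdim]; omega
  set N : Submodule ℂ V := ω.orthogonal M ⊓ W with hN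
  have hNdim : n ≤ Module.finrank ℂ N := by
    have h2 := Submodule.finrank_sup_add_finrank_inf_eq (ω.orthogonal M) W
    have h4 : Module.finrank ℂ (ω.orthogonal M ⊔ W : Submodule ℂ V)
        ≤ Module.finrank ℂ V := Submodule.finrank_le _
    rw [hMorth, hWdim] at h2
    rw [hN]
    omega
  obtain ⟨w, hwN, hww⟩ : ∃ w ∈ N, ω w w ≠ 0 := by
    by_contra hcon
    push_neg at hcon
    have hNiso : ∀ x ∈ N, ∀ y ∈ N, ω x y = 0 := by
      intro x hx y hy
      have h1 := hcon (x + y) (N.add_mem hx hy)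
      have h2 := hcon x hx
      have h3 := hcon y hy
      have hxy := hsym x y
      simp only [map_add, LinearMap.add_apply] at h1
      have h5 : ω x y + ω x y = 0 := by linear_combination h1 - h2 - h3 + hxy
      exact add_self_eq_zero.mp h5
    have := key N inf_le_right hNiso
    omega
  have hwW : w ∈ W := hwN.2
  have hwM : ∀ m ∈ M, ω m w = 0 := fun m hm => (mem_orthogonal_iff.1 hwN.1) m hm
  -- choose c with c ^ 2 = -ω w w / ω v v
  obtain ⟨c, hc⟩ := IsAlgClosed.exists_pow_nat_eq (k := ℂ) (-(ω w w) / ω (v : V) (v : V))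
    (n := 2) zero_lt_two
  have hc0 : c ≠ 0 := by
    intro h
    rw [h] at hc
    have : ω w w = 0 := by
      field_simp at hc
      simpa using hc
    exact hww this
  set u : V := w + c • (v : V) with hu
  have huu : ω u u = 0 := by
    have : c ^ 2 * ω (v : V) (v : V) = -(ω w w) := by
      rw [hc, div_mul_cancel₀ _ hvv]
    have h1 := hvW w hwW
    have h2 : ω (v : V) w = 0 := (hsym (v : V) w).trans h1
    simp only [hu, map_add, map_smul, LinearMap.add_apply, LinearMap.smul_apply,
      smul_eq_mul]
    linear_combination this + c * h1 + c * h2 + (ω (v:V) (v:V)) * (sq c).symm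
  have huW : u ∉ W := by
    intro hmem
    have : c • (v : V) ∈ W := by
      have := W.sub_mem hmem hwW
      simpa [hu] using this
    exact hvnotW ((W.smul_mem_iff hc0).1 this)
  have huM : ∀ m ∈ M, ω m u = 0 := by
    intro m hm
    have h1 := hwM m hm
    have h2 := hvW m (hMW hm)
    simp only [hu, map_add, map_smul, LinearMap.add_apply, LinearMap.smul_apply,
      smul_eq_mul]
    rw [h1, h2]; ring
  set L : Submodule ℂ V := M ⊔ (ℂ ∙ u) with hL
  have hmemL : ∀ x ∈ L, ∃ m ∈ M, ∃ s : ℂ, x = m + s • u := by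
    intro x hx
    obtain ⟨m, hm, z, hz, rfl⟩ := Submodule.mem_sup.1 hx
    obtain ⟨s, rfl⟩ := Submodule.mem_span_singleton.1 hz
    exact ⟨m, hm, s, rfl⟩
  have hLiso : ∀ x ∈ L, ∀ y ∈ L, ω x y = 0 := by
    intro x hx y hy
    obtain ⟨m, hm, s, rfl⟩ := hmemL x hx
    obtain ⟨m', hm', t, rfl⟩ := hmemL y hy
    have e1 := hMiso m hm m' hm'
    have e2 := huM m hm
    have e3 := huM m' hm'
    have e4 : ω u m' = 0 := (hsym u m').trans e3
    simp only [map_add, map_smul, LinearMap.add_apply, LinearMap.smul_apply,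
      smul_eq_mul]
    rw [e1, e2, e4, huu]; ring
  have huM' : u ∉ M := fun h => huW (hMW h)
  have hLdim : Module.finrank ℂ L = n := by
    have h1 : Module.finrank ℂ (ℂ ∙ u) = 1 :=
      finrank_span_singleton (fun h => huW (h ▸ W.zero_mem))
    have h3 : M ⊓ (ℂ ∙ u) = ⊥ := by
      rw [Submodule.eq_bot_iff]
      intro x ⟨hxM, hxs⟩
      obtain ⟨d, rfl⟩ := Submodule.mem_span_singleton.1 hxs
      rcases eq_or_ne d 0 with rfl | hd
      · simp
      · exact absurd ((M.smul_mem_iff hd).1 hxM) huM'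
    have h2 := Submodule.finrank_sup_add_finrank_inf_eq M (ℂ ∙ u)
    rw [h3, finrank_bot, h1, hMdim] at h2
    rw [hL]
    omega
  exact ⟨L, hLiso, hLdim, part2 L hLiso hLdim le_sup_left⟩
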